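/- In ℂ[x,y]³ with the coordinatewise Drury–Arveson norm, let f₁ = (x, 0, y) and f₂ = (0, x, y), and for each integer n ≥ 0 let h_n = (x yⁿ, −x yⁿ, 0). Then: (i) the only polynomials a, b ∈ ℂ[x,y] with a·f₁ + b·f₂ = h_n are a = yⁿ and b = −yⁿ; and (ii) there is no constant C such that ‖yⁿ·f₁‖² + ‖yⁿ·f₂‖² ≤ C‖h_n‖² for all n (indeed (‖yⁿ·f₁‖² + ‖yⁿ·f₂‖²)/‖h_n‖² = n + 2 for every n). In particular, {f₁, f₂} is not a stable generating set for the submodule of ℂ[x,y]³ it generates. -/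

import Mathlib

open scoped BigOperators
open MvPolynomial
noncomputable section

/-- The weight of the monomial `x^k y^l` in the Drury–Arveson norm on `ℂ[x,y]`:
`k! l!/(k+l)!`. -/
def wt (d : ℕ) (t : ℝ) (α : Fin d →₀ ℕ) : ℝ :=
  (∏ i, (Nat.factorial (α i) : ℝ)) /
    ∏ j ∈ Finset.range (∑ i, α i), ((d : ℝ) + t + (j + 1))

/-- The squared norm `‖f‖_t²` of a polynomial (distinct monomials orthogonal). -/
def tNormSq (d : ℕ) (t : ℝ) (f : MvPolynomial (Fin d) ℂ) : ℝ :=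
  ∑ α ∈ f.support, ‖MvPolynomial.coeff α f‖ ^ 2 * wt d t α

/-- The squared Drury–Arveson norm on `ℂ[x,y]³`:
`‖(h₁,h₂,h₃)‖² = ‖h₁‖² + ‖h₂‖² + ‖h₃‖²`. -/
def daNormVecSq (h : Fin 3 → MvPolynomial (Fin 2) ℂ) : ℝ :=
  ∑ i, tNormSq 2 (-2) (h i)

/-- The Drury–Arveson norm on `ℂ[x,y]³`. -/
def daNormVec (h : Fin 3 → MvPolynomial (Fin 2) ℂ) : ℝ :=
  Real.sqrt (daNormVecSq h)

lemma prod_denom (m : ℕ) :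
    ∏ j ∈ Finset.range m, (((2:ℕ) : ℝ) + (-2) + (j + 1)) = Nat.factorial m := by
  induction m with
  | zero => simp
  | succ k ih => rw [Finset.prod_range_succ, ih, Nat.factorial_succ]; push_cast; ring

lemma wt_single (k l : ℕ) :
    wt 2 (-2) (Finsupp.single 0 k + Finsupp.single 1 l) =
      (Nat.factorial k * Nat.factorial l : ℝ) / Nat.factorial (k + l) := by
  have h0 : ((Finsupp.single 0 k + Finsupp.single 1 l : Fin 2 →₀ ℕ)) 0 = k := by
    simp [Finsupp.single_apply]
  have h1 : ((Finsupp.single 0 k + Finsupp.single 1 l : Fin 2 →₀ ℕ)) 1 = l := by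
    simp [Finsupp.single_apply]
  rw [wt, Fin.prod_univ_two, Fin.sum_univ_two, h0, h1, prod_denom]

lemma tNormSq_monomial (α : Fin 2 →₀ ℕ) (c : ℂ) :
    tNormSq 2 (-2) (monomial α c) = ‖c‖ ^ 2 * wt 2 (-2) α := by
  by_cases hc : c = 0
  · simp [hc, tNormSq]
  · rw [tNormSq, support_monomial, if_neg hc, Finset.sum_singleton]
    simp [coeff_monomial]

lemma tNneg (f : MvPolynomial (Fin 2) ℂ) : tNormSq 2 (-2) (-f) = tNormSq 2 (-2) f := by
  simp [tNormSq, MvPolynomial.support_neg]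

lemma X0X1n (n : ℕ) : (X 0 * X 1 ^ n : MvPolynomial (Fin 2) ℂ) =
    monomial (Finsupp.single 0 1 + Finsupp.single 1 n) 1 := by
  rw [X_pow_eq_monomial, X, monomial_mul, mul_one]

lemma tN1 (n : ℕ) : tNormSq 2 (-2) (X 0 * X 1 ^ n : MvPolynomial (Fin 2) ℂ) = 1 / (n + 1) := by
  rw [X0X1n, tNormSq_monomial, wt_single]
  have hn : (Nat.factorial n : ℝ) ≠ 0 := Nat.cast_ne_zero.mpr n.factorial_ne_zero
  rw [show 1 + n = n + 1 by ring, Nat.factorial_succ]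
  simp only [Nat.factorial_one, Nat.factorial]
  push_cast
  field_simp
  ring_nf
  simp

lemma tN2 (n : ℕ) : tNormSq 2 (-2) (X 1 ^ (n+1) : MvPolynomial (Fin 2) ℂ) = 1 := by
  have : (X 1 ^ (n+1) : MvPolynomial (Fin 2) ℂ) =
      monomial (Finsupp.single 0 0 + Finsupp.single 1 (n+1)) 1 := by
    rw [X_pow_eq_monomial, Finsupp.single_zero, zero_add]
  rw [this, tNormSq_monomial, wt_single]
  have hn : (Nat.factorial (n+1) : ℝ) ≠ 0 := Nat.cast_ne_zero.mpr (n+1).factorial_ne_zero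
  simp [Nat.factorial_zero, div_self hn]

lemma tNzero : tNormSq 2 (-2) 0 = 0 := by simp [tNormSq]

lemma dv1 (n : ℕ) :
    daNormVecSq ((X 1 ^ n : MvPolynomial (Fin 2) ℂ) • ![X 0, 0, X 1]) = 1 / (n + 1) + 1 := by
  rw [daNormVecSq, Fin.sum_univ_three]
  simp only [Pi.smul_apply, Matrix.cons_val_zero, Matrix.cons_val_one, Matrix.head_cons,
    Matrix.cons_val_two, Matrix.tail_cons, smul_eq_mul, mul_zero]
  rw [mul_comm, show (X 1 ^ n * X 1 : MvPolynomial (Fin 2) ℂ) = X 1 ^ (n+1) by ring,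
    tN1, tN2, tNzero]
  ring

lemma dv2 (n : ℕ) :
    daNormVecSq ((X 1 ^ n : MvPolynomial (Fin 2) ℂ) • ![0, X 0, X 1]) = 1 / (n + 1) + 1 := by
  rw [daNormVecSq, Fin.sum_univ_three]
  simp only [Pi.smul_apply, Matrix.cons_val_zero, Matrix.cons_val_one, Matrix.head_cons,
    Matrix.cons_val_two, Matrix.tail_cons, smul_eq_mul, mul_zero]
  rw [mul_comm (X 1 ^ n) (X 0), show (X 1 ^ n * X 1 : MvPolynomial (Fin 2) ℂ) = X 1 ^ (n+1) by ring,
    tN1, tN2, tNzero]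
  ring

lemma dvh (n : ℕ) :
    daNormVecSq ![X 0 * X 1 ^ n, -(X 0 * X 1 ^ n), 0] = 2 / (n + 1) := by
  rw [daNormVecSq, Fin.sum_univ_three]
  simp only [Matrix.cons_val_zero, Matrix.cons_val_one, Matrix.head_cons,
    Matrix.cons_val_two, Matrix.tail_cons]
  rw [tNneg, tN1, tNzero]
  ring

lemma dvneg (v : Fin 3 → MvPolynomial (Fin 2) ℂ) : daNormVecSq (-v) = daNormVecSq v := by
  simp [daNormVecSq, tNneg]

/-- In `ℂ[x,y]³`, let `f₁ = (x,0,y)`, `f₂ = (0,x,y)` and, for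
`n ≥ 0`, `h_n = (xyⁿ, −xyⁿ, 0)`.  Then (i) the only way of writing
`h_n = a f₁ + b f₂` is `a = yⁿ`, `b = −yⁿ`; (ii) the quotient
`(‖yⁿf₁‖² + ‖yⁿf₂‖²)/‖h_n‖²` equals `n + 2`, so there is no constant `C` with
`‖yⁿf₁‖² + ‖yⁿf₂‖² ≤ C‖h_n‖²` for all `n`.  In particular `{f₁, f₂}` is not a
stable generating set for the submodule it generates. -/
theorem stmt_18
    (f₁ f₂ : Fin 3 → MvPolynomial (Fin 2) ℂ)
    (hf₁ : f₁ = ![X 0, 0, X 1])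
    (hf₂ : f₂ = ![0, X 0, X 1])
    (h : ℕ → (Fin 3 → MvPolynomial (Fin 2) ℂ))
    (hh : ∀ n, h n = ![X 0 * X 1 ^ n, -(X 0 * X 1 ^ n), 0]) :
    -- (i) uniqueness of the coefficients:
    (∀ (n : ℕ) (a b : MvPolynomial (Fin 2) ℂ),
      a • f₁ + b • f₂ = h n → a = X 1 ^ n ∧ b = -(X 1 ^ n)) ∧
    -- (ii) the ratio equals `n + 2` …
    (∀ n : ℕ,
      (daNormVecSq ((X 1 ^ n : MvPolynomial (Fin 2) ℂ) • f₁) +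
        daNormVecSq ((X 1 ^ n : MvPolynomial (Fin 2) ℂ) • f₂)) / daNormVecSq (h n)
        = (n : ℝ) + 2) ∧
    -- … so no constant `C` works:
    (¬ ∃ C : ℝ, ∀ n : ℕ,
      daNormVecSq ((X 1 ^ n : MvPolynomial (Fin 2) ℂ) • f₁) +
        daNormVecSq ((X 1 ^ n : MvPolynomial (Fin 2) ℂ) • f₂)
        ≤ C * daNormVecSq (h n)) ∧
    -- in particular `{f₁, f₂}` is not a stable generating set:
    ¬ ∃ A : ℝ, ∀ g ∈ Submodule.span (MvPolynomial (Fin 2) ℂ) {f₁, f₂},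
      ∃ g₁ g₂ : MvPolynomial (Fin 2) ℂ,
        g = g₁ • f₁ + g₂ • f₂ ∧
        daNormVec (g₁ • f₁) + daNormVec (g₂ • f₂) ≤ A * daNormVec g := by
  have hnpos : ∀ n : ℕ, (0:ℝ) < (n:ℝ) + 1 := fun n => by positivity
  -- part (i)
  have part1 : ∀ (n : ℕ) (a b : MvPolynomial (Fin 2) ℂ),
      a • f₁ + b • f₂ = h n → a = X 1 ^ n ∧ b = -(X 1 ^ n) := by
    intro n a b hab
    have h0 := congrFun hab 0
    have h1 := congrFun hab 1
    simp only [hf₁, hf₂, hh, Pi.add_apply, Pi.smul_apply, Matrix.cons_val_zero,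
      Matrix.cons_val_one, Matrix.head_cons, smul_eq_mul, mul_zero, add_zero,
      zero_add] at h0 h1
    constructor
    · exact mul_right_cancel₀ (X_ne_zero 0) (by rw [h0, mul_comm])
    · exact mul_right_cancel₀ (X_ne_zero 0) (by rw [h1]; ring)
  have part2 : ∀ n : ℕ,
      (daNormVecSq ((X 1 ^ n : MvPolynomial (Fin 2) ℂ) • f₁) +
        daNormVecSq ((X 1 ^ n : MvPolynomial (Fin 2) ℂ) • f₂)) / daNormVecSq (h n)
        = (n : ℝ) + 2 := by
    intro n
    rw [hf₁, hf₂, hh, dv1, dv2, dvh]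
    have := hnpos n
    field_simp
    ring
  refine ⟨part1, part2, ?_, ?_⟩
  -- part (iii)
  · rintro ⟨C, hC⟩
    set n := ⌈C⌉₊ with hn
    have key := hC n
    have hq : (0:ℝ) < daNormVecSq (h n) := by
      rw [hh, dvh]; positivity
    have h2 : (n:ℝ) + 2 ≤ C := by
      rw [← part2 n]
      exact (div_le_iff₀ hq).mpr key
    have := Nat.le_ceil C
    linarith
  -- part (iv)
  · rintro ⟨A, hA⟩
    set n := ⌈A^2⌉₊ with hn
    have hmem : h n ∈ Submodule.span (MvPolynomial (Fin 2) ℂ) {f₁, f₂} := by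
      have heq : h n = (X 1 ^ n : MvPolynomial (Fin 2) ℂ) • f₁ +
          (-(X 1 ^ n) : MvPolynomial (Fin 2) ℂ) • f₂ := by
        funext i
        fin_cases i <;>
          simp [hf₁, hf₂, hh, mul_comm] <;> ring
      rw [heq]
      exact Submodule.add_mem _
        (Submodule.smul_mem _ _ (Submodule.subset_span (by simp)))
        (Submodule.smul_mem _ _ (Submodule.subset_span (by simp)))
    obtain ⟨g₁, g₂, hg, hnorm⟩ := hA (h n) hmem
    obtain ⟨hg₁, hg₂⟩ := part1 n g₁ g₂ hg.symm
    rw [hg₁, hg₂] at hnorm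
    have hneg : ((-(X 1 ^ n) : MvPolynomial (Fin 2) ℂ) • f₂) = -((X 1 ^ n : MvPolynomial (Fin 2) ℂ) • f₂) := by
      funext i; simp [neg_smul]
    rw [hneg] at hnorm
    rw [daNormVec, daNormVec, daNormVec, dvneg] at hnorm
    rw [hf₁, hf₂, hh, dv1, dv2, dvh] at hnorm
    set S : ℝ := 1 / ((n:ℝ) + 1) + 1 with hS
    set Q : ℝ := 2 / ((n:ℝ) + 1) with hQ
    have hSpos : 0 < S := by rw [hS]; positivity
    have hQpos : 0 < Q := by rw [hQ]; positivity
    have hsum : S + S = ((n:ℝ) + 2) * Q := by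
      rw [hS, hQ]; field_simp; ring
    have hL : 0 ≤ Real.sqrt S + Real.sqrt S := by positivity
    have hsq : (Real.sqrt S + Real.sqrt S)^2 ≤ (A * Real.sqrt Q)^2 :=
      pow_le_pow_left₀ hL hnorm 2
    have hSS : Real.sqrt S ^ 2 = S := Real.sq_sqrt hSpos.le
    have hQQ : Real.sqrt Q ^ 2 = Q := Real.sq_sqrt hQpos.le
    have key : S + S ≤ A^2 * Q := by nlinarith [Real.sqrt_nonneg S]
    have hA2 : (n:ℝ) + 2 ≤ A^2 := by
      rw [hsum] at key
      exact le_of_mul_le_mul_right (by nlinarith) hQpos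
    have := Nat.le_ceil (A^2)
    linarith
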